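/- arXiv:1610.00945 — 2 statements merged into one kernel-verified Lean document; each statement's English description precedes it below -/
import Mathlib

section
/- With the unfolding operator (T_ε u)(x,y) = u(ε[x/ε] + εy), the norm is preserved: for all u ∈ L^p(Ω_ε) with 1 ≤ p < ∞, one has ‖T_ε u‖_{L^p(Ω × Y_*)} = ‖u‖_{L^p(Ω_ε)}. -/
open MeasureTheory Set
open scoped ENNReal
open scoped Pointwise
noncomputable section

/-- Euclidean space `ℝ^d`. -/
abbrev E (d : ℕ) := EuclideanSpace ℝ (Fin d)

/-- The unit cell `Y = [0,1)^d`. -/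
def unitCell (d : ℕ) : Set (E d) := {y | ∀ i, y i ∈ Ico (0:ℝ) 1}

/-- `ε[x/ε]`, the componentwise floor part. -/
def floorVec (d : ℕ) (ε : ℝ) (x : E d) : E d := WithLp.toLp 2 (fun i => ε * (⌊x i / ε⌋ : ℝ))

/-- `{x/ε}`, the componentwise fractional part. -/
def fracVec (d : ℕ) (ε : ℝ) (x : E d) : E d := WithLp.toLp 2 (fun i => Int.fract (x i / ε))

/-- The periodic unfolding operator `(T_ε u)(x,y) = u(ε[x/ε] + εy)`. -/
def unfoldOp {d : ℕ} {F : Type*} [AddCommGroup F] [Module ℝ F] (ε : ℝ) (u : E d → F) :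
    E d × E d → F :=
  fun p => u (floorVec d ε p.1 + ε • p.2)

/-- Embedding of integer lattice points. -/
def zvec (d : ℕ) (ξ : Fin d → ℤ) : E d := WithLp.toLp 2 (fun i => (ξ i : ℝ))

/-- The macroscopic domain `Ω = ∏_i [0, l_i)`. -/
def bigOmega (d : ℕ) (l : Fin d → ℝ) : Set (E d) := {x | ∀ i, x i ∈ Ico 0 (l i)}

/-- Nodal points `N_ε = {ξ ∈ ℤ^d | ε(ξ + Y) ⊆ Ω}`. -/
def nodal (d : ℕ) (ε : ℝ) (l : Fin d → ℝ) : Set (Fin d → ℤ) :=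
  {ξ | ∀ y ∈ unitCell d, ε • (zvec d ξ + y) ∈ bigOmega d l}

/-- The perforated domain `Ω_ε = ⋃_{ξ ∈ N_ε} ε(ξ + Y_*°)`. -/
def perfDomain (d : ℕ) (ε : ℝ) (l : Fin d → ℝ) (Ystar : Set (E d)) : Set (E d) :=
  ⋃ ξ ∈ nodal d ε l, (fun y => ε • (zvec d ξ + y)) '' interior Ystar

/-- The product measure on `Ω × Y_*`. -/
def twoScaleMeasure (d : ℕ) (l : Fin d → ℝ) (Ystar : Set (E d)) : Measure (E d × E d) :=
  (volume.restrict (bigOmega d l)).prod (volume.restrict Ystar)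

/-- The ε-cell `ε([x/ε] + Y_*)` containing `x`. -/
def cellOf (d : ℕ) (ε : ℝ) (Ystar : Set (E d)) (x : E d) : Set (E d) :=
  (fun y => floorVec d ε x + ε • y) '' Ystar

/-- The folding (averaging) operator `(F_ε U)(x) = ⨍_{ε([x/ε]+Y_*)} U(z, {x/ε}) dz`. -/
def foldOp {d : ℕ} {F : Type*} [NormedAddCommGroup F] [NormedSpace ℝ F]
    (ε : ℝ) (Ystar : Set (E d)) (U : E d × E d → F) : E d → F :=
  fun x => ⨍ z in cellOf d ε Ystar x, U (z, fracVec d ε x)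

section auxUnfold
variable {d : ℕ} {ε : ℝ} {l : Fin d → ℝ}

def tauMap (d : ℕ) (ε : ℝ) (ξ : Fin d → ℤ) : E d → E d := fun y => ε • (zvec d ξ + y)
def cellSet (d : ℕ) (ε : ℝ) (ξ : Fin d → ℤ) : Set (E d) := {x | ∀ i, ⌊x i / ε⌋ = ξ i}

lemma measurable_floorVec : Measurable (floorVec d ε) := by
  have h : Measurable fun x : Fin d → ℝ => (fun i => ε * (⌊x i / ε⌋ : ℝ) : Fin d → ℝ) := by
    apply measurable_pi_lambda
    intro i
    have h1 : Measurable fun x : Fin d → ℝ => ⌊x i / ε⌋ :=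
      ((measurable_pi_apply i : Measurable fun x : Fin d → ℝ => x i).div_const ε).floor
    have h2 : Measurable fun z : ℤ => (z : ℝ) := Measurable.of_discrete
    exact (h2.comp h1).const_mul ε
  exact (WithLp.measurable_toLp 2 _).comp (h.comp (WithLp.measurable_ofLp 2 _))

lemma measurable_cellSet (ξ : Fin d → ℤ) : MeasurableSet (cellSet d ε ξ) := by
  have : cellSet d ε ξ = ⋂ i, (fun x : E d => ⌊x i / ε⌋) ⁻¹' {ξ i} := by
    ext x; simp [cellSet, Set.mem_iInter]
  rw [this]
  refine MeasurableSet.iInter fun i => ?_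
  have h1 : Measurable fun x : E d => ⌊x i / ε⌋ :=
    (((measurable_pi_apply i : Measurable fun x : Fin d → ℝ => x i).comp (WithLp.measurable_ofLp 2 _)).div_const ε).floor
  exact h1 (measurableSet_singleton (ξ i))

lemma cellSet_disjoint : Pairwise (Function.onFun Disjoint (cellSet d ε)) := by
  intro ξ η hne
  rw [Function.onFun, Set.disjoint_left]
  rintro x hx hx'
  exact hne (funext fun i => (hx i).symm.trans (hx' i))

lemma volume_smul_add_image (hε : 0 < ε) (c : E d) (B : Set (E d)) :
    volume ((fun y : E d => c + ε • y) '' B) = ENNReal.ofReal (ε ^ d) * volume B := by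
  have h1 : (fun y : E d => c + ε • y) '' B = (fun y : E d => c + y) '' (ε • B) := by
    rw [← Set.image_smul, ← Set.image_comp]; rfl
  rw [h1, image_add_left, measure_preimage_add, Measure.addHaar_smul,
    finrank_euclideanSpace_fin, abs_of_nonneg (pow_nonneg hε.le d)]

lemma tauMap_eq (ξ : Fin d → ℤ) :
    tauMap d ε ξ = fun y : E d => (ε • zvec d ξ) + ε • y := by
  funext y; simp [tauMap, smul_add]

lemma volume_tauMap_image (hε : 0 < ε) (ξ : Fin d → ℤ) (B : Set (E d)) :
    volume (tauMap d ε ξ '' B) = ENNReal.ofReal (ε ^ d) * volume B := by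
  rw [tauMap_eq]; exact volume_smul_add_image hε _ B

lemma mem_cellSet_iff (hε : 0 < ε) (ξ : Fin d → ℤ) (x : E d) :
    x ∈ cellSet d ε ξ ↔ ∀ i, x i ∈ Ico (ε * ξ i) (ε * ξ i + ε) := by
  constructor
  · intro h i
    have hfl := h i
    have h1 : (ξ i : ℝ) ≤ x i / ε := hfl ▸ Int.floor_le _
    have h2 : x i / ε < ξ i + 1 := hfl ▸ Int.lt_floor_add_one _
    have hx1 : ε * (ξ i : ℝ) ≤ x i := by
      have := mul_le_mul_of_nonneg_left h1 hε.le
      rwa [mul_div_cancel₀ _ hε.ne'] at this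
    have hx2 : x i < ε * (ξ i : ℝ) + ε := by
      have := mul_lt_mul_of_pos_left h2 hε
      rw [mul_div_cancel₀ _ hε.ne'] at this
      linarith [this]
    exact ⟨hx1, hx2⟩
  · intro h i
    rcases h i with ⟨h1, h2⟩
    rw [Int.floor_eq_iff]
    constructor
    · rw [le_div_iff₀ hε]; linarith
    · rw [div_lt_iff₀ hε]; push_cast; linarith

lemma tauMap_image_unitCell (hε : 0 < ε) (ξ : Fin d → ℤ) :
    tauMap d ε ξ '' unitCell d = cellSet d ε ξ := by
  ext x
  rw [mem_cellSet_iff hε]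
  constructor
  · rintro ⟨y, hy, rfl⟩ i
    have hyi := hy i
    constructor
    · show ε * ξ i ≤ ε * ((ξ i : ℝ) + y i)
      nlinarith [hyi.1]
    · show ε * ((ξ i : ℝ) + y i) < ε * ξ i + ε
      nlinarith [hyi.2]
  · intro h
    refine ⟨WithLp.toLp 2 (fun i => x i / ε - ξ i), fun i => ?_, ?_⟩
    · rcases h i with ⟨h1, h2⟩
      constructor
      · rw [sub_nonneg, le_div_iff₀ hε]; linarith
      · rw [sub_lt_iff_lt_add, div_lt_iff₀ hε]; linarith
    · ext i
      show ε * ((ξ i : ℝ) + (x i / ε - ξ i)) = x i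
      field_simp
      ring

lemma volume_unitCell : volume (unitCell d) = 1 := by
  have h : unitCell d = (MeasurableEquiv.toLp 2 (Fin d → ℝ)).symm ⁻¹'
      (Set.univ.pi fun _ : Fin d => Ico (0:ℝ) 1) := by
    ext x
    simp only [unitCell, mem_setOf_eq, mem_preimage, Set.mem_univ_pi]
    exact Iff.rfl
  rw [h, (EuclideanSpace.volume_preserving_symm_measurableEquiv_toLp (Fin d)).measure_preimage
    (MeasurableSet.univ_pi fun _ => measurableSet_Ico).nullMeasurableSet]
  rw [volume_pi_pi]
  simp [Real.volume_Ico]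

lemma volume_cellSet (hε : 0 < ε) (ξ : Fin d → ℤ) :
    volume (cellSet d ε ξ) = ENNReal.ofReal (ε ^ d) := by
  rw [← tauMap_image_unitCell hε, volume_tauMap_image hε, volume_unitCell, mul_one]

lemma floorVec_eq_on_cell {ξ : Fin d → ℤ} {x : E d} (hx : x ∈ cellSet d ε ξ) :
    floorVec d ε x = ε • zvec d ξ := by
  ext i
  show ε * (⌊x i / ε⌋ : ℝ) = ε * (ξ i : ℝ)
  rw [hx i]

lemma floor_mem_nodal (hε : 0 < ε) (hcover : ∀ i, ∃ m : ℕ, l i = m * ε)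
    {x : E d} (hx : x ∈ bigOmega d l) : (fun i => ⌊x i / ε⌋) ∈ nodal d ε l := by
  intro y hy i
  rcases hcover i with ⟨m, hm⟩
  rcases hx i with ⟨hx0, hxl⟩
  rcases hy i with ⟨hy0, hy1⟩
  have hflnn : (0:ℝ) ≤ (⌊x i / ε⌋ : ℤ) := by
    exact_mod_cast Int.floor_nonneg.mpr (div_nonneg hx0 hε.le)
  have hfl : ⌊x i / ε⌋ < (m : ℤ) := by
    rw [Int.floor_lt]
    push_cast
    rw [div_lt_iff₀ hε]
    calc x i < l i := hxl
      _ = m * ε := hm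
  have hfl1 : ((⌊x i / ε⌋ : ℝ) + 1) ≤ m := by exact_mod_cast hfl
  have hcoord : (ε • (zvec d (fun i => ⌊x i / ε⌋) + y)) i = ε * ((⌊x i / ε⌋ : ℝ) + y i) := rfl
  rw [hcoord]
  constructor
  · positivity
  · calc ε * ((⌊x i / ε⌋ : ℝ) + y i) < ε * ((⌊x i / ε⌋ : ℝ) + 1) := by nlinarith
      _ ≤ ε * m := by nlinarith
      _ = l i := by rw [hm]; ring

lemma bigOmega_eq_iUnion (hε : 0 < ε) (hcover : ∀ i, ∃ m : ℕ, l i = m * ε) :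
    bigOmega d l = ⋃ ξ : nodal d ε l, cellSet d ε ξ.1 := by
  ext x
  constructor
  · intro hx
    exact mem_iUnion.mpr ⟨⟨_, floor_mem_nodal hε hcover hx⟩, fun i => rfl⟩
  · intro hx
    rcases mem_iUnion.mp hx with ⟨⟨ξ, hξ⟩, hc⟩
    rw [← tauMap_image_unitCell hε] at hc
    rcases hc with ⟨y, hy, rfl⟩
    exact hξ y hy

lemma tauMap_injective (hε : 0 < ε) (ξ : Fin d → ℤ) : Function.Injective (tauMap d ε ξ) := by
  intro a b hab
  rw [tauMap_eq] at hab
  have := add_left_cancel hab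
  exact smul_right_injective (E d) hε.ne' this

lemma tauMap_image_subset_cell (hε : 0 < ε) (ξ : Fin d → ℤ) {B : Set (E d)}
    (hB : B ⊆ unitCell d) : tauMap d ε ξ '' B ⊆ cellSet d ε ξ := by
  rw [← tauMap_image_unitCell hε]
  exact image_mono hB

lemma measurableSet_tauMap_image (hε : 0 < ε) (ξ : Fin d → ℤ) {B : Set (E d)}
    (hB : MeasurableSet B) : MeasurableSet (tauMap d ε ξ '' B) := by
  have he : tauMap d ε ξ =
      ⇑((Homeomorph.smulOfNeZero ε hε.ne').trans (Homeomorph.addLeft (ε • zvec d ξ))) := by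
    rw [tauMap_eq]
    funext y
    simp [add_comm]
  rw [he]
  exact (((Homeomorph.smulOfNeZero ε hε.ne').trans
    (Homeomorph.addLeft (ε • zvec d ξ))).measurableEmbedding).measurableSet_image.mpr hB

theorem map_Psi (hε : 0 < ε) (hcover : ∀ i, ∃ m : ℕ, l i = m * ε)
    (Ystar : Set (E d)) (hYsub : Ystar ⊆ unitCell d) (hYmeas : MeasurableSet Ystar) :
    Measure.map (fun p : E d × E d => floorVec d ε p.1 + ε • p.2)
      ((volume.restrict (bigOmega d l)).prod (volume.restrict Ystar))
    = volume.restrict (⋃ ξ : nodal d ε l, tauMap d ε ξ '' Ystar) := by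
  have hΨ : Measurable (fun p : E d × E d => floorVec d ε p.1 + ε • p.2) :=
    (measurable_floorVec.comp measurable_fst).add (measurable_snd.const_smul ε)
  ext A hA
  rw [Measure.map_apply hΨ hA, Measure.prod_apply (hΨ hA)]
  set g : E d → ℝ≥0∞ := fun c => volume (((fun y : E d => c + ε • y) ⁻¹' A) ∩ Ystar) with hg
  have hsec : ∀ x : E d, (volume.restrict Ystar)
      (Prod.mk x ⁻¹' ((fun p : E d × E d => floorVec d ε p.1 + ε • p.2) ⁻¹' A))
      = g (floorVec d ε x) := by
    intro x
    have hm : MeasurableSet ((fun y : E d => floorVec d ε x + ε • y) ⁻¹' A) := by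
      apply MeasurableSet.preimage hA
      exact (measurable_id.const_smul ε).const_add _
    have hset : (Prod.mk x ⁻¹' ((fun p : E d × E d => floorVec d ε p.1 + ε • p.2) ⁻¹' A))
        = (fun y : E d => floorVec d ε x + ε • y) ⁻¹' A := rfl
    rw [hset, Measure.restrict_apply hm]
  rw [lintegral_congr hsec]
  have hΩ : volume.restrict (bigOmega d l)
      = Measure.sum (fun ξ : nodal d ε l => volume.restrict (cellSet d ε ξ.1)) := by
    rw [bigOmega_eq_iUnion hε hcover]
    exact Measure.restrict_iUnion
      (fun a b hab => cellSet_disjoint (Subtype.coe_injective.ne hab))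
      (fun ξ => measurable_cellSet ξ.1)
  rw [hΩ, lintegral_sum_measure]
  have hcell : ∀ ξ : nodal d ε l,
      ∫⁻ x in cellSet d ε ξ.1, g (floorVec d ε x) ∂volume
      = volume (A ∩ tauMap d ε ξ.1 '' Ystar) := by
    intro ξ
    rw [setLIntegral_congr_fun (measurable_cellSet ξ.1)
      (fun x hx => by rw [floorVec_eq_on_cell hx]),
      setLIntegral_const, volume_cellSet hε]
    have h1 : g (ε • zvec d ξ.1) = volume ((tauMap d ε ξ.1 ⁻¹' A) ∩ Ystar) := by
      rw [hg, tauMap_eq]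
    rw [h1, mul_comm, ← volume_tauMap_image hε ξ.1, inter_comm,
      Set.image_inter_preimage, inter_comm]
  rw [tsum_congr hcell]
  have hdisj : Pairwise (Function.onFun Disjoint
      (fun ξ : nodal d ε l => A ∩ tauMap d ε ξ.1 '' Ystar)) := by
    intro a b hab
    exact Disjoint.mono (inter_subset_right.trans (tauMap_image_subset_cell hε _ hYsub))
      (inter_subset_right.trans (tauMap_image_subset_cell hε _ hYsub))
      (cellSet_disjoint (Subtype.coe_injective.ne hab))
  rw [← measure_iUnion hdisj
    (fun ξ => hA.inter (measurableSet_tauMap_image hε ξ.1 hYmeas)),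
    ← inter_iUnion, Measure.restrict_apply hA]

end auxUnfold

/-- Norm preservation for the unfolding operator:
`‖T_ε u‖_{L^p(Ω × Y_*)} = ‖u‖_{L^p(Ω_ε)}` for `1 ≤ p < ∞`. -/
theorem unfold_norm_preservation (d : ℕ) (l : Fin d → ℝ) (hl : ∀ i, 0 < l i)
    (ε : ℝ) (hε : 0 < ε) (hεinv : ∃ n : ℕ, ε * n = 1)
    (hcover : ∀ i, ∃ m : ℕ, l i = m * ε)
    (Ystar : Set (E d)) (hYsub : Ystar ⊆ unitCell d) (hYmeas : MeasurableSet Ystar)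
    (hYnull : volume (Ystar \ interior Ystar) = 0)
    (p : ℝ≥0∞) (hp : 1 ≤ p) (hp' : p ≠ ∞) (u : E d → ℝ)
    (hu : MemLp u p (volume.restrict (perfDomain d ε l Ystar))) :
    eLpNorm (unfoldOp ε u) p (twoScaleMeasure d l Ystar)
      = eLpNorm u p (volume.restrict (perfDomain d ε l Ystar)) := by
  have hΨ : Measurable (fun p : E d × E d => floorVec d ε p.1 + ε • p.2) :=
    (measurable_floorVec.comp measurable_fst).add (measurable_snd.const_smul ε)
  have hperf : perfDomain d ε l Ystar
      = ⋃ ξ : nodal d ε l, tauMap d ε ξ.1 '' interior Ystar := by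
    rw [perfDomain, biUnion_eq_iUnion]
    rfl
  have hrestrict : volume.restrict (⋃ ξ : nodal d ε l, tauMap d ε ξ.1 '' Ystar)
      = volume.restrict (perfDomain d ε l Ystar) := by
    apply Measure.restrict_congr_set
    rw [hperf]
    refine (ae_eq_set.mpr ⟨?_, ?_⟩)
    · refine measure_mono_null (fun x hx => ?_)
        (measure_iUnion_null (fun ξ : nodal d ε l => ?_)
          (s := fun ξ : nodal d ε l => tauMap d ε ξ.1 '' (Ystar \ interior Ystar)))
      · rcases hx with ⟨hxS, hxP⟩
        rcases mem_iUnion.mp hxS with ⟨ξ, y, hy, rfl⟩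
        refine mem_iUnion.mpr ⟨ξ, y, ⟨hy, fun hint => ?_⟩, rfl⟩
        exact hxP (mem_iUnion.mpr ⟨ξ, y, hint, rfl⟩)
      · rw [volume_tauMap_image hε, hYnull, mul_zero]
    · have hsub : (⋃ ξ : nodal d ε l, tauMap d ε ξ.1 '' interior Ystar)
          ⊆ ⋃ ξ : nodal d ε l, tauMap d ε ξ.1 '' Ystar :=
        iUnion_mono fun ξ => image_mono interior_subset
      rw [diff_eq_empty.mpr hsub]
      exact measure_empty
  have hpres : MeasurePreserving (fun p : E d × E d => floorVec d ε p.1 + ε • p.2)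
      (twoScaleMeasure d l Ystar) (volume.restrict (perfDomain d ε l Ystar)) :=
    ⟨hΨ, by rw [twoScaleMeasure, map_Psi hε hcover Ystar hYsub hYmeas, hrestrict]⟩
  exact eLpNorm_comp_measurePreserving hu.1 hpres
end
end

section
/- With the unfolding operator T_ε as defined, the integration formula ∫_{Ω_ε} u dx = ∫_{Ω × Y_*} (T_ε u)(x,y) dx dy holds for all u ∈ L¹(Ω_ε). -/
open MeasureTheory Set
open scoped ENNReal
noncomputable section

open scoped Pointwise
open scoped Function

namespace UnfoldAux

/-- The affine map `y ↦ ε(ξ + y)`. -/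
def cmap (d : ℕ) (ε : ℝ) (ξ : Fin d → ℤ) : E d → E d := fun y => ε • (zvec d ξ + y)

lemma cmap_apply (d : ℕ) (ε : ℝ) (ξ : Fin d → ℤ) (y : E d) (i : Fin d) :
    cmap d ε ξ y i = ε * ((ξ i : ℝ) + y i) := by simp [cmap, zvec, mul_add]

lemma cmap_injective (d : ℕ) {ε : ℝ} (hε : 0 < ε) (ξ : Fin d → ℤ) :
    Function.Injective (cmap d ε ξ) := by
  intro a b hab
  have : (zvec d ξ + a) = (zvec d ξ + b) := smul_right_injective _ hε.ne' hab
  exact add_left_cancel this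

lemma floor_cmap (d : ℕ) {ε : ℝ} (hε : 0 < ε) (ξ : Fin d → ℤ) {y : E d}
    (hy : y ∈ unitCell d) (i : Fin d) : ⌊cmap d ε ξ y i / ε⌋ = ξ i := by
  have h1 : cmap d ε ξ y i / ε = (ξ i : ℝ) + y i := by
    rw [cmap_apply]; field_simp
  rw [h1, Int.floor_eq_iff]
  have h2 := (hy i).1
  have h3 := (hy i).2
  constructor <;> [linarith; linarith]

lemma mem_cell_iff (d : ℕ) {ε : ℝ} (hε : 0 < ε) (ξ : Fin d → ℤ) (x : E d) :
    x ∈ cmap d ε ξ '' unitCell d ↔ ∀ i, ⌊x i / ε⌋ = ξ i := by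
  constructor
  · rintro ⟨y, hy, rfl⟩ i
    exact floor_cmap d hε ξ hy i
  · intro hx
    refine ⟨(WithLp.toLp 2 (fun i => Int.fract (x i / ε)) : E d), fun i => ⟨Int.fract_nonneg _, Int.fract_lt_one _⟩, ?_⟩
    ext i
    rw [cmap_apply, ← hx i, PiLp.toLp_apply]
    have : ((⌊x i / ε⌋ : ℝ) + Int.fract (x i / ε)) = x i / ε := Int.floor_add_fract _
    rw [this]; field_simp

lemma cell_subset (d : ℕ) (ε : ℝ) (ξ : Fin d → ℤ) {S : Set (E d)} (hS : S ⊆ unitCell d) :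
    cmap d ε ξ '' S ⊆ cmap d ε ξ '' unitCell d := image_mono hS

lemma cells_disjoint (d : ℕ) {ε : ℝ} (hε : 0 < ε) {S : Set (E d)} (hS : S ⊆ unitCell d) :
    Pairwise (Disjoint on fun ξ : Fin d → ℤ => cmap d ε ξ '' S) := by
  intro ξ ξ' hne
  refine Set.disjoint_left.2 fun x hx hx' => ?_
  have h1 := (mem_cell_iff d hε ξ x).1 (cell_subset d ε ξ hS hx)
  have h2 := (mem_cell_iff d hε ξ' x).1 (cell_subset d ε ξ' hS hx')
  exact hne (funext fun i => (h1 i).symm.trans (h2 i))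

/-- The inverse affine map. -/
def cinv (d : ℕ) (ε : ℝ) (ξ : Fin d → ℤ) : E d → E d := fun x => ε⁻¹ • x - zvec d ξ

lemma cinv_leftInv (d : ℕ) {ε : ℝ} (hε : 0 < ε) (ξ : Fin d → ℤ) :
    Function.LeftInverse (cinv d ε ξ) (cmap d ε ξ) := by
  intro y
  simp only [cinv, cmap, smul_smul, inv_mul_cancel₀ hε.ne', one_smul]
  abel

lemma cinv_rightInv (d : ℕ) {ε : ℝ} (hε : 0 < ε) (ξ : Fin d → ℤ) :
    Function.RightInverse (cinv d ε ξ) (cmap d ε ξ) := by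
  intro x
  simp only [cinv, cmap]
  rw [add_sub_cancel, smul_smul, mul_inv_cancel₀ hε.ne', one_smul]

lemma cinv_measurable (d : ℕ) (ε : ℝ) (ξ : Fin d → ℤ) : Measurable (cinv d ε ξ) := by
  have : Continuous (cinv d ε ξ) := by
    unfold cinv
    fun_prop
  exact this.measurable

lemma image_eq_preimage (d : ℕ) {ε : ℝ} (hε : 0 < ε) (ξ : Fin d → ℤ) (S : Set (E d)) :
    cmap d ε ξ '' S = cinv d ε ξ ⁻¹' S := by
  rw [Set.image_eq_preimage_of_inverse (cinv_leftInv d hε ξ) (cinv_rightInv d hε ξ)]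

lemma cell_measurable (d : ℕ) {ε : ℝ} (hε : 0 < ε) (ξ : Fin d → ℤ) {S : Set (E d)}
    (hS : MeasurableSet S) : MeasurableSet (cmap d ε ξ '' S) := by
  rw [image_eq_preimage d hε ξ]
  exact cinv_measurable d ε ξ hS

lemma vol_image (d : ℕ) {ε : ℝ} (hε : 0 < ε) (ξ : Fin d → ℤ) (S : Set (E d)) :
    volume (cmap d ε ξ '' S) = ENNReal.ofReal (ε ^ d) * volume S := by
  have h1 : cmap d ε ξ '' S = (fun v => ε • zvec d ξ + v) '' (ε • S) := by
    rw [← Set.image_smul, Set.image_image]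
    apply Set.image_congr
    intro y _
    simp [cmap, smul_add]
  have h2 := congrFun (Set.image_eq_preimage_of_inverse
      (f := fun v : E d => ε • zvec d ξ + v) (g := fun v => -(ε • zvec d ξ) + v)
      (fun v => neg_add_cancel_left _ _) (fun v => add_neg_cancel_left _ _)) (ε • S)
  rw [h1, h2, measure_preimage_add, Measure.addHaar_smul]
  rw [finrank_euclideanSpace_fin, abs_of_pos (pow_pos hε d)]

lemma vol_preimage (d : ℕ) {ε : ℝ} (hε : 0 < ε) (ξ : Fin d → ℤ) (s : Set (E d)) :
    volume (cmap d ε ξ ⁻¹' s) = ENNReal.ofReal ((ε ^ d)⁻¹) * volume s := by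
  have h1 : cmap d ε ξ ⁻¹' s = (fun y : E d => ε • y) ⁻¹' ((fun v => ε • zvec d ξ + v) ⁻¹' s) := by
    ext y
    simp [cmap, smul_add]
  rw [h1, Measure.addHaar_preimage_smul _ hε.ne', measure_preimage_add]
  rw [finrank_euclideanSpace_fin, abs_of_pos (inv_pos.2 (pow_pos hε d))]

lemma vol_unitCell (d : ℕ) : volume (unitCell d) = 1 := by
  have h := (EuclideanSpace.volume_preserving_symm_measurableEquiv_toLp (Fin d)).measure_preimage
    (s := Set.univ.pi fun _ : Fin d => Ico (0:ℝ) 1)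
    (MeasurableSet.univ_pi (fun _ => measurableSet_Ico)).nullMeasurableSet
  have h2 : (⇑(MeasurableEquiv.toLp 2 (Fin d → ℝ)).symm ⁻¹' (Set.univ.pi fun _ => Ico (0:ℝ) 1))
      = unitCell d := by
    ext x; simp [Set.mem_pi, unitCell]
  rw [h2] at h
  rw [h, volume_pi_pi]
  simp

lemma vol_cell_full (d : ℕ) {ε : ℝ} (hε : 0 < ε) (ξ : Fin d → ℤ) :
    volume (cmap d ε ξ '' unitCell d) = ENNReal.ofReal (ε ^ d) := by
  rw [vol_image d hε, vol_unitCell, mul_one]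

lemma omega_eq (d : ℕ) (l : Fin d → ℝ) {ε : ℝ} (hε : 0 < ε)
    (hcover : ∀ i, ∃ m : ℕ, l i = m * ε) :
    bigOmega d l = ⋃ ξ ∈ nodal d ε l, cmap d ε ξ '' unitCell d := by
  ext x
  simp only [Set.mem_iUnion, exists_prop]
  constructor
  · intro hx
    refine ⟨fun i => ⌊x i / ε⌋, ?_, (mem_cell_iff d hε _ x).2 fun i => rfl⟩
    intro y hy i
    obtain ⟨m, hm⟩ := hcover i
    have hx0 : (0:ℝ) ≤ x i := (hx i).1
    have hx1 : x i < l i := (hx i).2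
    have hy0 := (hy i).1
    have hy1 := (hy i).2
    have hfl0 : (0:ℤ) ≤ ⌊x i / ε⌋ := Int.floor_nonneg.2 (div_nonneg hx0 hε.le)
    have hflm : ⌊x i / ε⌋ < (m : ℤ) := by
      rw [Int.floor_lt]
      push_cast
      rw [div_lt_iff₀ hε]
      rw [hm] at hx1
      linarith
    have key : (ε • ((zvec d fun i => ⌊x i / ε⌋) + y)) i = ε * ((⌊x i / ε⌋ : ℝ) + y i) := by simp [zvec, mul_add]
    constructor
    · rw [key]
      have : (0:ℝ) ≤ (⌊x i / ε⌋ : ℝ) := by exact_mod_cast hfl0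
      positivity
    · rw [key, hm]
      have h1 : (⌊x i / ε⌋ : ℝ) + 1 ≤ (m : ℝ) := by exact_mod_cast hflm
      nlinarith
  · rintro ⟨ξ, hξ, y, hy, rfl⟩
    exact hξ y hy

/-- The unfolding change-of-variables map. -/
def Phi (d : ℕ) (ε : ℝ) : E d × E d → E d := fun p => floorVec d ε p.1 + ε • p.2

lemma floorVec_measurable (d : ℕ) (ε : ℝ) : Measurable (floorVec d ε) := by
  apply (PiLp.continuous_toLp 2 (fun _ : Fin d => ℝ)).measurable.comp
  apply measurable_pi_lambda
  intro i
  have h1 : Measurable fun x : E d => x i :=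
    (PiLp.continuous_apply 2 (fun _ : Fin d => ℝ) i).measurable
  have h2 : Measurable fun x : E d => (⌊x i / ε⌋ : ℤ) := Int.measurable_floor.comp (h1.div_const ε)
  exact (measurable_from_top.comp h2 : Measurable fun x : E d => ((⌊x i / ε⌋:ℤ):ℝ)).const_mul ε

lemma Phi_measurable (d : ℕ) (ε : ℝ) : Measurable (Phi d ε) :=
  ((floorVec_measurable d ε).comp measurable_fst).add (measurable_snd.const_smul ε)

lemma floorVec_on_cell (d : ℕ) {ε : ℝ} (hε : 0 < ε) (ξ : Fin d → ℤ) {x : E d}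
    (hx : x ∈ cmap d ε ξ '' unitCell d) : floorVec d ε x = ε • zvec d ξ := by
  have h := (mem_cell_iff d hε ξ x).1 hx
  ext i
  simp [floorVec, zvec, h i]

lemma unitCell_measurable (d : ℕ) : MeasurableSet (unitCell d) := by
  have h : unitCell d = ⋂ i, (fun x : E d => x i) ⁻¹' Ico (0:ℝ) 1 := by
    ext x; simp [unitCell]
  rw [h]
  exact MeasurableSet.iInter fun i =>
    (PiLp.continuous_apply 2 (fun _ : Fin d => ℝ) i).measurable measurableSet_Ico

lemma cmap_measurable (d : ℕ) (ε : ℝ) (ξ : Fin d → ℤ) : Measurable (cmap d ε ξ) := by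
  have : Continuous (cmap d ε ξ) := by
    unfold cmap
    fun_prop
  exact this.measurable

/-- The key measure identity. -/
lemma map_measure_eq (d : ℕ) (l : Fin d → ℝ) {ε : ℝ} (hε : 0 < ε)
    (hcover : ∀ i, ∃ m : ℕ, l i = m * ε)
    (Ystar : Set (E d)) (hYsub : Ystar ⊆ unitCell d) (hYmeas : MeasurableSet Ystar) :
    Measure.map (Phi d ε) (twoScaleMeasure d l Ystar)
      = volume.restrict (⋃ ξ ∈ nodal d ε l, cmap d ε ξ '' Ystar) := by
  have hSd : Pairwise (Disjoint on fun ξ : ↥(nodal d ε l) => cmap d ε (ξ : Fin d → ℤ) '' unitCell d) := by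
    intro ξ ξ' hne
    exact cells_disjoint d hε (le_refl (unitCell d)) (Subtype.coe_ne_coe.2 hne)
  have hSds : Pairwise (Disjoint on fun ξ : ↥(nodal d ε l) => cmap d ε (ξ : Fin d → ℤ) '' Ystar) := by
    intro ξ ξ' hne
    exact cells_disjoint d hε hYsub (Subtype.coe_ne_coe.2 hne)
  refine Measure.ext fun s hs => ?_
  rw [Measure.map_apply (Phi_measurable d ε) hs]
  rw [twoScaleMeasure, Measure.prod_apply ((Phi_measurable d ε) hs)]
  -- decompose Ω
  have hΩ : bigOmega d l = ⋃ ξ : ↥(nodal d ε l), cmap d ε (ξ : Fin d → ℤ) '' unitCell d := by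
    rw [omega_eq d l hε hcover, Set.iUnion_coe_set]
  rw [hΩ, Measure.restrict_iUnion hSd (fun ξ => cell_measurable d hε _ (unitCell_measurable d)),
    lintegral_sum_measure]
  have hterm : ∀ ξ : ↥(nodal d ε l),
      ∫⁻ x in cmap d ε (ξ : Fin d → ℤ) '' unitCell d,
        (volume.restrict Ystar) (Prod.mk x ⁻¹' (Phi d ε ⁻¹' s)) ∂volume
      = volume (s ∩ cmap d ε (ξ : Fin d → ℤ) '' Ystar) := by
    intro ξ
    have hconst : ∀ x ∈ cmap d ε (ξ : Fin d → ℤ) '' unitCell d,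
        (volume.restrict Ystar) (Prod.mk x ⁻¹' (Phi d ε ⁻¹' s))
        = ENNReal.ofReal ((ε ^ d)⁻¹) * volume (s ∩ cmap d ε (ξ : Fin d → ℤ) '' Ystar) := by
      intro x hx
      have h1 : Prod.mk x ⁻¹' (Phi d ε ⁻¹' s) = cmap d ε (ξ : Fin d → ℤ) ⁻¹' s := by
        ext y
        simp only [Set.mem_preimage, Phi, cmap]
        rw [floorVec_on_cell d hε _ hx, ← smul_add]
      rw [h1, Measure.restrict_apply ((cmap_measurable d ε _) hs)]
      have h2 : cmap d ε (ξ : Fin d → ℤ) ⁻¹' s ∩ Ystar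
          = cmap d ε (ξ : Fin d → ℤ) ⁻¹' (s ∩ cmap d ε (ξ : Fin d → ℤ) '' Ystar) := by
        rw [Set.preimage_inter, Set.preimage_image_eq _ (cmap_injective d hε _)]
      rw [h2, vol_preimage d hε]
    rw [setLIntegral_congr_fun (cell_measurable d hε _ (unitCell_measurable d))
      hconst, setLIntegral_const, vol_cell_full d hε,
      mul_comm, ← mul_assoc, ← ENNReal.ofReal_mul (pow_pos hε d).le,
      mul_inv_cancel₀ (pow_pos hε d).ne', ENNReal.ofReal_one, one_mul]
  rw [tsum_congr hterm]
  have hA : (⋃ ξ ∈ nodal d ε l, cmap d ε ξ '' Ystar)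
      = ⋃ ξ : ↥(nodal d ε l), cmap d ε (ξ : Fin d → ℤ) '' Ystar := by
    rw [Set.iUnion_coe_set]
  rw [Measure.restrict_apply hs, hA, Set.inter_iUnion]
  rw [measure_iUnion]
  · intro ξ ξ' hne
    exact (hSds hne).mono inter_subset_right inter_subset_right
  · exact fun ξ => hs.inter (cell_measurable d hε _ hYmeas)

end UnfoldAux

open UnfoldAux in
/-- Integration formula for the unfolding operator:
`∫_{Ω_ε} u dx = ∫_{Ω × Y_*} (T_ε u)(x,y) dx dy` for all `u ∈ L¹(Ω_ε)`. -/
theorem unfold_integration_formula (d : ℕ) (l : Fin d → ℝ) (hl : ∀ i, 0 < l i)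
    (ε : ℝ) (hε : 0 < ε) (hεinv : ∃ n : ℕ, ε * n = 1)
    (hcover : ∀ i, ∃ m : ℕ, l i = m * ε)
    (Ystar : Set (E d)) (hYsub : Ystar ⊆ unitCell d) (hYmeas : MeasurableSet Ystar)
    (hYnull : volume (Ystar \ interior Ystar) = 0)
    (u : E d → ℝ) (hu : Integrable u (volume.restrict (perfDomain d ε l Ystar))) :
    ∫ x, u x ∂(volume.restrict (perfDomain d ε l Ystar))
      = ∫ z, unfoldOp ε u z ∂(twoScaleMeasure d l Ystar) := by
  set A := ⋃ ξ ∈ nodal d ε l, cmap d ε ξ '' Ystar with hAdef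
  have hperf_sub : perfDomain d ε l Ystar ⊆ A := by
    refine Set.iUnion₂_mono fun ξ _ => ?_
    exact Set.image_mono interior_subset
  have hAe : A =ᵐ[(volume : Measure (E d))] perfDomain d ε l Ystar := by
    rw [ae_eq_set]
    refine ⟨?_, ?_⟩
    · refine measure_mono_null
        (t := ⋃ ξ ∈ nodal d ε l, cmap d ε ξ '' (Ystar \ interior Ystar)) ?_ ?_
      · intro x hx
        obtain ⟨hxA, hxP⟩ := hx
        rw [hAdef, Set.mem_iUnion₂] at hxA
        obtain ⟨ξ, hξ, y, hy, rfl⟩ := hxA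
        refine Set.mem_biUnion hξ ⟨y, ⟨hy, fun hyint => hxP ?_⟩, rfl⟩
        exact Set.mem_biUnion hξ ⟨y, hyint, rfl⟩
      · rw [measure_biUnion_null_iff (Set.to_countable _)]
        intro ξ _
        rw [vol_image d hε, hYnull, mul_zero]
    · rw [Set.diff_eq_empty.2 hperf_sub, measure_empty]
  have hres : volume.restrict (perfDomain d ε l Ystar) = volume.restrict A :=
    (Measure.restrict_congr_set hAe).symm
  have hmap := map_measure_eq d l hε hcover Ystar hYsub hYmeas
  rw [hres, ← hmap]
  rw [integral_map (Phi_measurable d ε).aemeasurable]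
  · rfl
  · rw [hmap, ← hres]
    exact hu.1
end
end
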